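/- For every integer N ≥ 1, every real number q > 1, and every real number X such that 1 - (-q)^{-(N-k)} X ≠ 0 for all 0 ≤ k ≤ N-1, one has ∑_{k=0}^{N-1} (-1)^k (-q)^{-k(k-1)/2} / [ (1 - (-q)^{-(N-k)} X) · ∏_{l=1}^{N-k-1}(1 - (-q)^{-l}) · ∏_{l=1}^{k}(1 - (-q)^{-l}) ] = (-1)^{N-1} (-q)^{-N(N-1)/2} X^{N-1} / ∏_{l=1}^{N}(1 - (-q)^{-l} X). -/

import Mathlib

open Finset


private lemma tri_succ (a : ℕ) : (a + 1) * a / 2 = a * (a - 1) / 2 + a := by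
  cases a with
  | zero => simp
  | succ b =>
      simp only [Nat.add_sub_cancel]
      have h : (b + 1 + 1) * (b + 1) = (b + 1) * b + 2 * (b + 1) := by ring
      omega

private noncomputable def AA (t : ℝ) (n k : ℕ) (X : ℝ) : ℝ :=
  (-1 : ℝ) ^ k * t ^ (k * (k - 1) / 2) /
    ((1 - t ^ (n - k) * X) * (∏ l ∈ Finset.Icc 1 (n - k - 1), (1 - t ^ l)) *
      (∏ l ∈ Finset.Icc 1 k, (1 - t ^ l)))

private lemma point (t : ℝ) (ht : ∀ l : ℕ, 1 ≤ l → 1 - t ^ l ≠ 0) (N : ℕ) (hN : 1 ≤ N)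
    (X : ℝ) (k : ℕ) (hk : k ≤ N) (h1 : 1 - t ^ (N + 1 - k) * X ≠ 0) :
    (1 - t ^ N) * AA t (N + 1) k X
      = (if k < N then AA t N k (t * X) else 0)
        + (if k = 0 then 0 else -(t ^ (N - 1)) * AA t N (k - 1) X) := by
  have hP : ∀ m : ℕ, (∏ l ∈ Icc 1 m, (1 - t ^ l)) ≠ 0 := fun m =>
    Finset.prod_ne_zero_iff.mpr fun l hl => ht l (Finset.mem_Icc.mp hl).1
  rcases Nat.eq_zero_or_pos k with hk0 | hk1
  · subst hk0
    rw [if_pos (by omega), if_pos rfl, add_zero]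
    obtain ⟨m, rfl⟩ : ∃ m, N = m + 1 := ⟨N - 1, by omega⟩
    simp only [AA, Nat.sub_zero, Nat.add_sub_cancel, pow_zero, Nat.zero_mul, Nat.zero_div]
    rw [Finset.prod_Icc_succ_top (by omega : 1 ≤ m + 1)]
    have h1' : 1 - t ^ (m + 1 + 1) * X ≠ 0 := by simpa using h1
    have h2 := ht (m + 1) (by omega)
    have h3 : (1 : ℝ) - t ^ (m + 1) * (t * X) = 1 - t ^ (m + 1 + 1) * X := by ring
    rw [h3]
    simp only [show Finset.Icc 1 0 = (∅ : Finset ℕ) from rfl, Finset.prod_empty,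
      one_mul, mul_one, ← mul_div_assoc]
    rw [div_eq_div_iff (by apply_rules [mul_ne_zero, h1', h2, hP] <;> omega)
      (by apply_rules [mul_ne_zero, h1', h2, hP] <;> omega)]
    ring
  · rcases eq_or_lt_of_le hk with hkN | hkN
    · subst hkN
      rw [if_neg (lt_irrefl _), if_neg (by omega), zero_add]
      obtain ⟨m, rfl⟩ : ∃ m, k = m + 1 := ⟨k - 1, by omega⟩
      have h1' : 1 - t ^ 1 * X ≠ 0 := by
        have e : m + 1 + 1 - (m + 1) = 1 := by omega
        rwa [e] at h1
      simp only [AA, Nat.add_sub_cancel, Nat.add_sub_cancel_left, Nat.succ_sub_one,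
        show m + 1 + 1 - (m + 1) = 1 from by omega,
        show m + 1 + 1 - (m + 1) - 1 = 0 from by omega,
        show m + 1 - m = 1 from by omega,
        show m + 1 - m - 1 = 0 from by omega]
      rw [Finset.prod_Icc_succ_top (by omega : 1 ≤ m + 1), tri_succ m]
      have h2 := ht (m + 1) (by omega)
      have h3 := hP m
      simp only [show Finset.Icc 1 0 = (∅ : Finset ℕ) from rfl, Finset.prod_empty,
        one_mul, mul_one, ← mul_div_assoc]
      rw [div_eq_div_iff (by apply_rules [mul_ne_zero, h1', h2, h3] <;> omega)
        (by apply_rules [mul_ne_zero, h1', h2, h3] <;> omega)]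
      ring
    · -- 0 < k < N
      obtain ⟨a, rfl⟩ : ∃ a, k = a + 1 := ⟨k - 1, by omega⟩
      obtain ⟨b, hb⟩ : ∃ b, N = a + 1 + (b + 1) := ⟨N - a - 2, by omega⟩
      subst hb
      rw [if_pos (by omega), if_neg (by omega)]
      have h1' : 1 - t ^ (b + 2) * X ≠ 0 := by
        have e : a + 1 + (b + 1) + 1 - (a + 1) = b + 2 := by omega
        rwa [e] at h1
      simp only [AA, Nat.add_sub_cancel,
        show a + 1 + (b + 1) + 1 - (a + 1) = b + 2 from by omega,
        show a + 1 + (b + 1) + 1 - (a + 1) - 1 = b + 1 from by omega,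
        show a + 1 + (b + 1) - (a + 1) = b + 1 from by omega,
        show a + 1 + (b + 1) - (a + 1) - 1 = b from by omega,
        show a + 1 + (b + 1) - a = b + 2 from by omega,
        show a + 1 + (b + 1) - a - 1 = b + 1 from by omega,
        show a + 1 + (b + 1) - 1 = a + b + 1 from by omega,
        show (b : ℕ) + 2 - 1 = b + 1 from by omega]
      rw [tri_succ a]
      rw [Finset.prod_Icc_succ_top (by omega : 1 ≤ b + 1),
        Finset.prod_Icc_succ_top (by omega : 1 ≤ a + 1)]
      have h2' : (1 : ℝ) - t ^ (b + 1) * (t * X) = 1 - t ^ (b + 2) * X := by ring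
      rw [h2']
      have hb1 := ht (b + 1) (by omega)
      have ha1 := ht (a + 1) (by omega)
      have hpa := hP a
      have hpb := hP b
      simp only [← mul_div_assoc]
      rw [div_add_div _ _ (by apply_rules [mul_ne_zero, h1', hpa, hpb, ha1, hb1] <;> omega)
        (by apply_rules [mul_ne_zero, h1', hpa, hpb, ha1, hb1] <;> omega)]
      rw [div_eq_div_iff (by apply_rules [mul_ne_zero, h1', hpa, hpb, ha1, hb1] <;> omega)
        (by apply_rules [mul_ne_zero, h1', hpa, hpb, ha1, hb1] <;> omega)]
      ring

private lemma aux (t : ℝ) (ht : ∀ l : ℕ, 1 ≤ l → 1 - t ^ l ≠ 0) :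
    ∀ N : ℕ, 1 ≤ N → ∀ X : ℝ, (∀ k < N, 1 - t ^ (N - k) * X ≠ 0) →
      ∑ k ∈ Finset.range N, AA t N k X
        = (-1 : ℝ) ^ (N - 1) * t ^ (N * (N - 1) / 2) * X ^ (N - 1) /
            ∏ l ∈ Finset.Icc 1 N, (1 - t ^ l * X) := by
  have hP : ∀ m : ℕ, (∏ l ∈ Icc 1 m, (1 - t ^ l)) ≠ 0 := fun m =>
    Finset.prod_ne_zero_iff.mpr fun l hl => ht l (Finset.mem_Icc.mp hl).1
  intro N
  induction N with
  | zero => omega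
  | succ N ih =>
    intro _ X hX
    have hQ : ∀ (Y : ℝ) (M : ℕ), (∀ k < M, 1 - t ^ (M - k) * Y ≠ 0) →
        (∏ l ∈ Icc 1 M, (1 - t ^ l * Y)) ≠ 0 := by
      intro Y M h
      refine Finset.prod_ne_zero_iff.mpr fun l hl => ?_
      obtain ⟨hl1, hl2⟩ := Finset.mem_Icc.mp hl
      have := h (M - l) (by omega)
      rwa [show M - (M - l) = l from by omega] at this
    rcases Nat.eq_zero_or_pos N with rfl | hN1
    · -- base case N+1 = 1
      simp only [Finset.sum_range_one, AA]
      norm_num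
    · -- inductive step
      have hX1 : ∀ k < N, 1 - t ^ (N - k) * (t * X) ≠ 0 := by
        intro k hk
        have h := hX k (by omega)
        have e : t ^ (N - k) * (t * X) = t ^ (N + 1 - k) * X := by
          rw [show N + 1 - k = (N - k) + 1 from by omega]; ring
        rw [e]; exact h
      have hX2 : ∀ k < N, 1 - t ^ (N - k) * X ≠ 0 := by
        intro k hk
        have h := hX (k + 1) (by omega)
        rwa [show N + 1 - (k + 1) = N - k from by omega] at h
      have htN := ht N hN1
      have key : (1 - t ^ N) * ∑ k ∈ Finset.range (N + 1), AA t (N + 1) k X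
          = (∑ k ∈ Finset.range N, AA t N k (t * X))
            - t ^ (N - 1) * ∑ k ∈ Finset.range N, AA t N k X := by
        rw [Finset.mul_sum]
        rw [Finset.sum_congr rfl fun k hk => point t ht N hN1 X k
          (by have := Finset.mem_range.mp hk; omega)
          (hX k (Finset.mem_range.mp hk))]
        rw [Finset.sum_add_distrib]
        congr 1
        · rw [Finset.sum_range_succ, if_neg (lt_irrefl N), add_zero]
          exact Finset.sum_congr rfl fun k hk => if_pos (Finset.mem_range.mp hk)
        · rw [Finset.sum_range_succ']
          simp only [Nat.succ_ne_zero, if_false, Nat.add_sub_cancel, if_pos rfl, add_zero,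
            reduceIte]
          simp only [neg_mul, Finset.sum_neg_distrib, ← Finset.mul_sum]
      -- now use the induction hypothesis
      obtain ⟨m, rfl⟩ : ∃ m, N = m + 1 := ⟨N - 1, by omega⟩
      have s1 := ih hN1 (t * X) hX1
      have s2 := ih hN1 X hX2
      rw [s1, s2] at key
      -- reindex the product with t*X
      have f1 : (∏ l ∈ Icc 1 (m + 1), (1 - t ^ l * (t * X)))
          = ∏ l ∈ Icc 2 (m + 2), (1 - t ^ l * X) := by
        have e1 : (Icc 1 (m + 1)).map (addRightEmbedding 1) = Icc 2 (m + 2) := by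
          rw [Finset.map_add_right_Icc]
        rw [← e1, Finset.prod_map]
        refine Finset.prod_congr rfl fun l _ => ?_
        simp only [addRightEmbedding_apply]
        rw [pow_succ]; ring
      rw [f1, mul_pow] at key
      have hQbot : (∏ l ∈ Icc 1 (m + 2), (1 - t ^ l * X))
          = (1 - t ^ 1 * X) * ∏ l ∈ Icc 2 (m + 2), (1 - t ^ l * X) := by
        have e : Icc 1 (m + 2) = insert 1 (Icc 2 (m + 2)) := by
          ext x; simp only [Finset.mem_Icc, Finset.mem_insert]; omega
        rw [e, Finset.prod_insert (by simp [Finset.mem_Icc])]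
      have hQtop : (∏ l ∈ Icc 1 (m + 2), (1 - t ^ l * X))
          = (∏ l ∈ Icc 1 (m + 1), (1 - t ^ l * X)) * (1 - t ^ (m + 2) * X) :=
        Finset.prod_Icc_succ_top (by omega) _
      have h1x : 1 - t ^ 1 * X ≠ 0 := by
        have := hX (m + 1) (by omega)
        rwa [show m + 1 + 1 - (m + 1) = 1 from by omega] at this
      have htop : 1 - t ^ (m + 2) * X ≠ 0 := by
        have := hX 0 (by omega)
        rwa [show m + 1 + 1 - 0 = m + 2 from by omega] at this
      have hPi1 : (∏ l ∈ Icc 1 (m + 1), (1 - t ^ l * X)) ≠ 0 := hQ X (m + 1) hX2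
      have hXM : ∀ k < m + 2, 1 - t ^ (m + 2 - k) * X ≠ 0 := by
        intro k hk
        have h := hX k (by omega)
        rwa [show m + 1 + 1 - k = m + 2 - k from by omega] at h
      have hPi2 : (∏ l ∈ Icc 2 (m + 2), (1 - t ^ l * X)) ≠ 0 := by
        intro h0
        exact hQ X (m + 2) hXM (by rw [hQbot, h0, mul_zero])
      have hPi2eq : (∏ l ∈ Icc 2 (m + 2), (1 - t ^ l * X))
          = (∏ l ∈ Icc 1 (m + 1), (1 - t ^ l * X)) * (1 - t ^ (m + 2) * X) / (1 - t ^ 1 * X) := by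
        rw [eq_div_iff h1x, ← hQtop, hQbot]; ring
      rw [hPi2eq] at key
      simp only [Nat.add_sub_cancel] at key
      -- finish
      simp only [Nat.add_sub_cancel]
      rw [tri_succ (m + 1)]
      simp only [Nat.add_sub_cancel]
      rw [hQtop, eq_div_iff (mul_ne_zero hPi1 htop)]
      apply mul_left_cancel₀ htN
      calc (1 - t ^ (m + 1)) * ((∑ k ∈ Finset.range (m + 1 + 1), AA t (m + 1 + 1) k X) *
              ((∏ l ∈ Icc 1 (m + 1), (1 - t ^ l * X)) * (1 - t ^ (m + 2) * X)))
          = ((1 - t ^ (m + 1)) * ∑ k ∈ Finset.range (m + 1 + 1), AA t (m + 1 + 1) k X) *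
              ((∏ l ∈ Icc 1 (m + 1), (1 - t ^ l * X)) * (1 - t ^ (m + 2) * X)) := by ring
        _ = ((-1) ^ m * t ^ ((m + 1) * m / 2) * (t ^ m * X ^ m) /
              ((∏ l ∈ Icc 1 (m + 1), (1 - t ^ l * X)) * (1 - t ^ (m + 2) * X) / (1 - t ^ 1 * X)) -
              t ^ m * ((-1) ^ m * t ^ ((m + 1) * m / 2) * X ^ m /
                ∏ l ∈ Icc 1 (m + 1), (1 - t ^ l * X))) *
              ((∏ l ∈ Icc 1 (m + 1), (1 - t ^ l * X)) * (1 - t ^ (m + 2) * X)) := by rw [key]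
        _ = (1 - t ^ (m + 1)) *
              ((-1) ^ (m + 1) * t ^ ((m + 1) * m / 2 + (m + 1)) * X ^ (m + 1)) := by
            have hPQ : ∀ a : ℝ, a / (∏ l ∈ Icc 1 (m + 1), (1 - t ^ l * X)) *
                ((∏ l ∈ Icc 1 (m + 1), (1 - t ^ l * X)) * (1 - t ^ (m + 2) * X))
                = a * (1 - t ^ (m + 2) * X) := fun a => by
              rw [div_mul_eq_mul_div, mul_comm (∏ l ∈ Icc 1 (m + 1), (1 - t ^ l * X)),
                ← mul_assoc, mul_div_cancel_right₀ _ hPi1]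
            rw [sub_mul, div_div_eq_mul_div, div_mul_cancel₀ _ (mul_ne_zero hPi1 htop),
              mul_div_assoc', mul_assoc, hPQ]
            ring


private lemma tri_cast (k : ℕ) :
    -((k : ℤ) * ((k : ℤ) - 1) / 2) = -((k * (k - 1) / 2 : ℕ) : ℤ) := by
  cases k with
  | zero => simp
  | succ n =>
    congr 1
    rw [Int.natCast_div]
    push_cast [Nat.add_sub_cancel]
    rw [show ((n : ℤ) + 1 - 1) = n from by ring]

/-- Identity (5.23): a partial-fraction/Vandermonde-type identity. -/
theorem stmt_0 (N : ℕ) (hN : 1 ≤ N) (q : ℝ) (hq : 1 < q) (X : ℝ)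
    (hX : ∀ k < N, 1 - (-q) ^ (-((N : ℤ) - (k : ℤ))) * X ≠ 0) :
    ∑ k ∈ Finset.range N,
      (-1 : ℝ) ^ k * (-q) ^ (-((k : ℤ) * ((k : ℤ) - 1) / 2)) /
        ((1 - (-q) ^ (-((N : ℤ) - (k : ℤ))) * X) *
          (∏ l ∈ Finset.Icc 1 (N - k - 1), (1 - (-q) ^ (-(l : ℤ)))) *
          (∏ l ∈ Finset.Icc 1 k, (1 - (-q) ^ (-(l : ℤ)))))
    = (-1 : ℝ) ^ (N - 1) * (-q) ^ (-((N : ℤ) * ((N : ℤ) - 1) / 2)) * X ^ (N - 1) /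
        ∏ l ∈ Finset.Icc 1 N, (1 - (-q) ^ (-(l : ℤ)) * X) := by
  set t : ℝ := (-q)⁻¹ with htdef
  have hq0 : (-q : ℝ) ≠ 0 := by intro h; nlinarith [h]
  have hz : ∀ l : ℕ, (-q : ℝ) ^ (-(l : ℤ)) = t ^ l := by
    intro l
    rw [zpow_neg, zpow_natCast, htdef, inv_pow]
  have habs : |t| < 1 := by
    rw [htdef, abs_inv, abs_neg, abs_of_pos (by linarith)]
    rw [inv_lt_one_iff₀]
    right; exact hq
  have ht : ∀ l : ℕ, 1 ≤ l → 1 - t ^ l ≠ 0 := by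
    intro l hl h
    have h1 : t ^ l = 1 := by linarith [sub_eq_zero.mp h]
    have h2 : |t ^ l| < 1 := by
      rw [abs_pow]
      exact pow_lt_one₀ (abs_nonneg t) habs (by omega)
    rw [h1] at h2
    simp at h2
  have hX' : ∀ k < N, 1 - t ^ (N - k) * X ≠ 0 := by
    intro k hk
    have h := hX k hk
    rwa [show (N : ℤ) - (k : ℤ) = ((N - k : ℕ) : ℤ) from by omega, hz] at h
  have hsum : (∑ k ∈ Finset.range N,
      (-1 : ℝ) ^ k * (-q) ^ (-((k : ℤ) * ((k : ℤ) - 1) / 2)) /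
        ((1 - (-q) ^ (-((N : ℤ) - (k : ℤ))) * X) *
          (∏ l ∈ Finset.Icc 1 (N - k - 1), (1 - (-q) ^ (-(l : ℤ)))) *
          (∏ l ∈ Finset.Icc 1 k, (1 - (-q) ^ (-(l : ℤ))))))
      = ∑ k ∈ Finset.range N, AA t N k X := by
    refine Finset.sum_congr rfl fun k hk => ?_
    have hk' := Finset.mem_range.mp hk
    simp only [AA, tri_cast k,
      show (N : ℤ) - (k : ℤ) = ((N - k : ℕ) : ℤ) from by omega, hz]
  rw [hsum, aux t ht N hN X hX', tri_cast N]
  simp only [hz]
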